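/- Let u : ℝ² → ℝ be C² on a neighborhood of the closed unit ball, with u = 0 on ∂B and -Δu(x) = λ₁ u(x) + g(u(x)) for all x ∈ B. If u does not change sign on B (that is, u ≥ 0 everywhere on B, or u ≤ 0 everywhere on B), then u is identically zero on B. Equivalently, every nonzero solution of the comparison equation must change sign. -/

import Mathlib

open MeasureTheory Metric Real Filter

noncomputable section

/-- The Euclidean plane. -/
abbrev Plane : Type := EuclideanSpace ℝ (Fin 2)

/-- The Laplacian of `u : Plane → ℝ`, as the sum of second partial derivatives
in the standard coordinate directions. -/
def lap (u : Plane → ℝ) (x : Plane) : ℝ :=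
  ∑ i : Fin 2,
    fderiv ℝ (fun y => fderiv ℝ u y (EuclideanSpace.single i 1)) x (EuclideanSpace.single i 1)

/-- The cutoff sine nonlinearity: `g t = sin t` for `|t| ≤ π` and `g t = 0` otherwise. -/
def gfun (t : ℝ) : ℝ := if |t| ≤ π then Real.sin t else 0

namespace CompSign

open Set

/-- The polar coordinates map `(r, θ) ↦ (r cos θ, r sin θ)`. -/
def pc (p : ℝ × ℝ) : ℝ × ℝ := (p.1 * Real.cos p.2, p.1 * Real.sin p.2)

lemma pc_eq_polar (p : ℝ × ℝ) : polarCoord.symm p = pc p := polarCoord_symm_apply p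

lemma continuous_pc : Continuous pc := by
  unfold pc; fun_prop

/-- radial flux function -/
def Gf (f₁ f₂ : ℝ × ℝ → ℝ) (p : ℝ × ℝ) : ℝ :=
  p.1 * (f₁ (pc p) * Real.cos p.2 + f₂ (pc p) * Real.sin p.2)

/-- angular flux function -/
def Hf (f₁ f₂ : ℝ × ℝ → ℝ) (p : ℝ × ℝ) : ℝ :=
  Real.cos p.2 * f₂ (pc p) - Real.sin p.2 * f₁ (pc p)

/-- radial derivative of `Gf` -/
def Af (f₁ f₂ : ℝ × ℝ → ℝ) (p : ℝ × ℝ) : ℝ :=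
  (f₁ (pc p) * Real.cos p.2 + f₂ (pc p) * Real.sin p.2)
  + p.1 * (Real.cos p.2 * fderiv ℝ f₁ (pc p) (Real.cos p.2, Real.sin p.2)
      + Real.sin p.2 * fderiv ℝ f₂ (pc p) (Real.cos p.2, Real.sin p.2))

/-- angular derivative of `Hf` -/
def Bf (f₁ f₂ : ℝ × ℝ → ℝ) (p : ℝ × ℝ) : ℝ :=
  Real.cos p.2 * fderiv ℝ f₂ (pc p) (-(p.1 * Real.sin p.2), p.1 * Real.cos p.2)
  - Real.sin p.2 * fderiv ℝ f₁ (pc p) (-(p.1 * Real.sin p.2), p.1 * Real.cos p.2)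
  - (f₁ (pc p) * Real.cos p.2 + f₂ (pc p) * Real.sin p.2)

lemma clm_eval (D : ℝ × ℝ →L[ℝ] ℝ) (a b : ℝ) : D (a, b) = a * D (1, 0) + b * D (0, 1) := by
  have h : (a, b) = a • ((1 : ℝ), (0 : ℝ)) + b • ((0 : ℝ), (1 : ℝ)) := by
    simp [Prod.ext_iff]
  rw [h, map_add, _root_.map_smul, _root_.map_smul, smul_eq_mul, smul_eq_mul]

lemma Af_add_Bf (f₁ f₂ : ℝ × ℝ → ℝ) (p : ℝ × ℝ) :
    Af f₁ f₂ p + Bf f₁ f₂ p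
      = p.1 * (fderiv ℝ f₁ (pc p) (1, 0) + fderiv ℝ f₂ (pc p) (0, 1)) := by
  have h := Real.sin_sq_add_cos_sq p.2
  rw [Af, Bf, clm_eval (fderiv ℝ f₁ (pc p)) (Real.cos p.2) (Real.sin p.2),
    clm_eval (fderiv ℝ f₂ (pc p)) (Real.cos p.2) (Real.sin p.2),
    clm_eval (fderiv ℝ f₁ (pc p)) (-(p.1 * Real.sin p.2)) (p.1 * Real.cos p.2),
    clm_eval (fderiv ℝ f₂ (pc p)) (-(p.1 * Real.sin p.2)) (p.1 * Real.cos p.2)]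
  linear_combination (p.1 * fderiv ℝ f₁ (pc p) (1, 0) + p.1 * fderiv ℝ f₂ (pc p) (0, 1)) * h

lemma hasDerivAt_Gf (f₁ f₂ : ℝ × ℝ → ℝ) {r θ : ℝ}
    (h₁ : DifferentiableAt ℝ f₁ (pc (r, θ))) (h₂ : DifferentiableAt ℝ f₂ (pc (r, θ))) :
    HasDerivAt (fun s => Gf f₁ f₂ (s, θ)) (Af f₁ f₂ (r, θ)) r := by
  have hcurve : HasDerivAt (fun s : ℝ => pc (s, θ)) (Real.cos θ, Real.sin θ) r := by
    simpa [pc] using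
      ((hasDerivAt_id r).mul_const (Real.cos θ)).prodMk ((hasDerivAt_id r).mul_const (Real.sin θ))
  have h1c : HasDerivAt (fun s => f₁ (pc (s, θ)))
      (fderiv ℝ f₁ (pc (r, θ)) (Real.cos θ, Real.sin θ)) r :=
    h₁.hasFDerivAt.comp_hasDerivAt r hcurve
  have h2c : HasDerivAt (fun s => f₂ (pc (s, θ)))
      (fderiv ℝ f₂ (pc (r, θ)) (Real.cos θ, Real.sin θ)) r :=
    h₂.hasFDerivAt.comp_hasDerivAt r hcurve
  have key := (hasDerivAt_id r).mul ((h1c.mul_const (Real.cos θ)).add (h2c.mul_const (Real.sin θ)))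
  have keyfn : HasDerivAt (fun s => Gf f₁ f₂ (s, θ))
      (1 * (f₁ (pc (r, θ)) * Real.cos θ + f₂ (pc (r, θ)) * Real.sin θ) +
        r * (fderiv ℝ f₁ (pc (r, θ)) (Real.cos θ, Real.sin θ) * Real.cos θ +
          fderiv ℝ f₂ (pc (r, θ)) (Real.cos θ, Real.sin θ) * Real.sin θ)) r := by
    simpa [Gf, Pi.mul_def, Pi.add_def] using key
  convert keyfn using 1
  simp only [Af]
  ring

lemma hasDerivAt_Hf (f₁ f₂ : ℝ × ℝ → ℝ) {r θ : ℝ}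
    (h₁ : DifferentiableAt ℝ f₁ (pc (r, θ))) (h₂ : DifferentiableAt ℝ f₂ (pc (r, θ))) :
    HasDerivAt (fun t => Hf f₁ f₂ (r, t)) (Bf f₁ f₂ (r, θ)) θ := by
  have hc1 : HasDerivAt (fun t => r * Real.cos t) (-(r * Real.sin θ)) θ := by
    simpa [mul_comm] using (Real.hasDerivAt_cos θ).const_mul r
  have hc2 : HasDerivAt (fun t => r * Real.sin t) (r * Real.cos θ) θ := by
    simpa [mul_comm] using (Real.hasDerivAt_sin θ).const_mul r
  have hcurve : HasDerivAt (fun t : ℝ => pc (r, t)) (-(r * Real.sin θ), r * Real.cos θ) θ := by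
    simpa [pc] using hc1.prodMk hc2
  have h1c : HasDerivAt (fun t => f₁ (pc (r, t)))
      (fderiv ℝ f₁ (pc (r, θ)) (-(r * Real.sin θ), r * Real.cos θ)) θ :=
    h₁.hasFDerivAt.comp_hasDerivAt θ hcurve
  have h2c : HasDerivAt (fun t => f₂ (pc (r, t)))
      (fderiv ℝ f₂ (pc (r, θ)) (-(r * Real.sin θ), r * Real.cos θ)) θ :=
    h₂.hasFDerivAt.comp_hasDerivAt θ hcurve
  have key := ((Real.hasDerivAt_cos θ).mul h2c).sub ((Real.hasDerivAt_sin θ).mul h1c)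
  have keyfn : HasDerivAt (fun t => Hf f₁ f₂ (r, t))
      ((-Real.sin θ * f₂ (pc (r, θ)) +
          Real.cos θ * fderiv ℝ f₂ (pc (r, θ)) (-(r * Real.sin θ), r * Real.cos θ)) -
        (Real.cos θ * f₁ (pc (r, θ)) +
          Real.sin θ * fderiv ℝ f₁ (pc (r, θ)) (-(r * Real.sin θ), r * Real.cos θ))) θ := by
    simpa [Hf, Pi.mul_def, Pi.sub_def] using key
  convert keyfn using 1
  simp only [Bf]
  ring


section Continuity

variable {f₁ f₂ : ℝ × ℝ → ℝ} {U : Set (ℝ × ℝ)}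

/-- the closed disc -/
def Kd : Set (ℝ × ℝ) := {p : ℝ × ℝ | p.1 ^ 2 + p.2 ^ 2 ≤ 1}

/-- the open disc -/
def Dd : Set (ℝ × ℝ) := {p : ℝ × ℝ | p.1 ^ 2 + p.2 ^ 2 < 1}

/-- the strip -/
def Td : Set (ℝ × ℝ) := Set.Icc (0:ℝ) 1 ×ˢ (Set.univ : Set ℝ)

lemma pc_mem_Kd {p : ℝ × ℝ} (hp : p ∈ Td) : pc p ∈ Kd := by
  obtain ⟨⟨h0, h1⟩, -⟩ := hp
  have hsc := Real.sin_sq_add_cos_sq p.2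
  simp only [Kd, pc, Set.mem_setOf_eq]
  have key : (p.1 * Real.cos p.2) ^ 2 + (p.1 * Real.sin p.2) ^ 2 = p.1 ^ 2 := by
    linear_combination p.1 ^ 2 * hsc
  rw [key]
  nlinarith

lemma isOpen_Dd : IsOpen Dd :=
  isOpen_lt (by fun_prop) continuous_const

lemma isCompact_Kd : IsCompact Kd := by
  have hcl : IsClosed Kd := isClosed_le (by fun_prop) continuous_const
  have hsub : Kd ⊆ Metric.closedBall (0 : ℝ × ℝ) 1 := by
    intro p hp
    simp only [Kd, Set.mem_setOf_eq] at hp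
    rw [Metric.mem_closedBall, Prod.dist_eq]
    simp only [Prod.fst_zero, Prod.snd_zero, dist_zero_right, Real.norm_eq_abs, sup_le_iff]
    constructor <;>
      · rw [abs_le]
        constructor <;> nlinarith [sq_nonneg p.1, sq_nonneg p.2]
  exact (isCompact_closedBall 0 1).of_isClosed_subset hcl hsub

lemma contOn_comp_pc (hU : IsOpen U) (hf : ContDiffOn ℝ 1 f₁ U) (hKU : Kd ⊆ U) :
    ContinuousOn (fun p => f₁ (pc p)) Td :=
  hf.continuousOn.comp continuous_pc.continuousOn fun p hp => hKU (pc_mem_Kd hp)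

lemma contOn_fderiv_pc (hU : IsOpen U) (hf : ContDiffOn ℝ 1 f₁ U) (hKU : Kd ⊆ U) :
    ContinuousOn (fun p => fderiv ℝ f₁ (pc p)) Td :=
  (hf.continuousOn_fderiv_of_isOpen hU le_rfl).comp continuous_pc.continuousOn
    fun p hp => hKU (pc_mem_Kd hp)

lemma contOn_Af (hU : IsOpen U) (hf₁ : ContDiffOn ℝ 1 f₁ U) (hf₂ : ContDiffOn ℝ 1 f₂ U)
    (hKU : Kd ⊆ U) : ContinuousOn (Af f₁ f₂) Td := by
  have hcos : ContinuousOn (fun p : ℝ × ℝ => Real.cos p.2) Td := by fun_prop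
  have hsin : ContinuousOn (fun p : ℝ × ℝ => Real.sin p.2) Td := by fun_prop
  have hfst : ContinuousOn (fun p : ℝ × ℝ => p.1) Td := by fun_prop
  have hvec : ContinuousOn (fun p : ℝ × ℝ => ((Real.cos p.2, Real.sin p.2) : ℝ × ℝ)) Td := by
    fun_prop
  exact (((contOn_comp_pc hU hf₁ hKU).mul hcos).add ((contOn_comp_pc hU hf₂ hKU).mul hsin)).add
    (hfst.mul ((hcos.mul ((contOn_fderiv_pc hU hf₁ hKU).clm_apply hvec)).add
      (hsin.mul ((contOn_fderiv_pc hU hf₂ hKU).clm_apply hvec))))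

lemma contOn_Bf (hU : IsOpen U) (hf₁ : ContDiffOn ℝ 1 f₁ U) (hf₂ : ContDiffOn ℝ 1 f₂ U)
    (hKU : Kd ⊆ U) : ContinuousOn (Bf f₁ f₂) Td := by
  have hcos : ContinuousOn (fun p : ℝ × ℝ => Real.cos p.2) Td := by fun_prop
  have hsin : ContinuousOn (fun p : ℝ × ℝ => Real.sin p.2) Td := by fun_prop
  have hvec : ContinuousOn
      (fun p : ℝ × ℝ => ((-(p.1 * Real.sin p.2), p.1 * Real.cos p.2) : ℝ × ℝ)) Td := by fun_prop
  exact ((hcos.mul ((contOn_fderiv_pc hU hf₂ hKU).clm_apply hvec)).sub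
    (hsin.mul ((contOn_fderiv_pc hU hf₁ hKU).clm_apply hvec))).sub
    (((contOn_comp_pc hU hf₁ hKU).mul hcos).add ((contOn_comp_pc hU hf₂ hKU).mul hsin))

end Continuity


theorem divergence_ball {f₁ f₂ : ℝ × ℝ → ℝ} {U : Set (ℝ × ℝ)} (hU : IsOpen U)
    (hKU : Kd ⊆ U) (hf₁ : ContDiffOn ℝ 1 f₁ U) (hf₂ : ContDiffOn ℝ 1 f₂ U)
    (hb₁ : ∀ p : ℝ × ℝ, p.1 ^ 2 + p.2 ^ 2 = 1 → f₁ p = 0)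
    (hb₂ : ∀ p : ℝ × ℝ, p.1 ^ 2 + p.2 ^ 2 = 1 → f₂ p = 0) :
    ∫ p in Dd, (fderiv ℝ f₁ p (1, 0) + fderiv ℝ f₂ p (0, 1)) = 0 := by
  have hdiff₁ : ∀ p ∈ U, DifferentiableAt ℝ f₁ p := fun p hp =>
    (hf₁.differentiableOn one_ne_zero).differentiableAt (hU.mem_nhds hp)
  have hdiff₂ : ∀ p ∈ U, DifferentiableAt ℝ f₂ p := fun p hp =>
    (hf₂.differentiableOn one_ne_zero).differentiableAt (hU.mem_nhds hp)
  set div : ℝ × ℝ → ℝ := fun p => fderiv ℝ f₁ p (1, 0) + fderiv ℝ f₂ p (0, 1) with hdiv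
  set S : Set (ℝ × ℝ) := Set.Ioo (0 : ℝ) 1 ×ˢ Set.Ioo (-π) π with hSdef
  have hmeasS : MeasurableSet S := measurableSet_Ioo.prod measurableSet_Ioo
  have hSsub : S ⊆ polarCoord.target := by
    rw [polarCoord_target]
    exact Set.prod_mono Set.Ioo_subset_Ioi_self subset_rfl
  have hS_T : S ⊆ Td :=
    Set.prod_mono Set.Ioo_subset_Icc_self (Set.subset_univ _)
  have hEcomp : IsCompact (Set.Icc (0:ℝ) 1 ×ˢ Set.Icc (-π) π) :=
    isCompact_Icc.prod isCompact_Icc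
  have hE_T : (Set.Icc (0:ℝ) 1 ×ˢ Set.Icc (-π) π) ⊆ Td :=
    Set.prod_mono subset_rfl (Set.subset_univ _)
  have hSE : S ⊆ Set.Icc (0:ℝ) 1 ×ˢ Set.Icc (-π) π :=
    Set.prod_mono Set.Ioo_subset_Icc_self Set.Ioo_subset_Icc_self
  have hAint : IntegrableOn (Af f₁ f₂) S := by
    exact ((((contOn_Af hU hf₁ hf₂ hKU).mono hE_T).integrableOn_compact hEcomp).mono_set hSE)
  have hBint : IntegrableOn (Bf f₁ f₂) S := by
    exact ((((contOn_Bf hU hf₁ hf₂ hKU).mono hE_T).integrableOn_compact hEcomp).mono_set hSE)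
  have step1 : ∫ p in Dd, div p = ∫ p, Dd.indicator div p :=
    (integral_indicator isOpen_Dd.measurableSet).symm
  have step2 : ∫ p, Dd.indicator div p
      = ∫ p in polarCoord.target, p.1 • Dd.indicator div (polarCoord.symm p) :=
    (integral_comp_polarCoord_symm (Dd.indicator div)).symm
  have step3 : ∫ p in polarCoord.target, p.1 • Dd.indicator div (polarCoord.symm p)
      = ∫ p in S, p.1 • Dd.indicator div (polarCoord.symm p) := by
    apply setIntegral_eq_of_subset_of_forall_diff_eq_zero
      polarCoord.open_target.measurableSet hSsub
    intro p hp
    obtain ⟨hpt, hps⟩ := hp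
    rw [polarCoord_target] at hpt
    obtain ⟨h1, h2⟩ := hpt
    have hr1 : 1 ≤ p.1 := by
      by_contra hlt
      push_neg at hlt
      exact hps ⟨⟨h1, hlt⟩, h2⟩
    have hnot : polarCoord.symm p ∉ Dd := by
      rw [pc_eq_polar]
      simp only [Dd, pc, Set.mem_setOf_eq, not_lt]
      have key : (p.1 * Real.cos p.2) ^ 2 + (p.1 * Real.sin p.2) ^ 2 = p.1 ^ 2 := by
        linear_combination p.1 ^ 2 * Real.sin_sq_add_cos_sq p.2
      rw [key]
      nlinarith
    rw [Set.indicator_of_notMem hnot, smul_zero]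
  have step4 : ∫ p in S, p.1 • Dd.indicator div (polarCoord.symm p)
      = ∫ p in S, (Af f₁ f₂ p + Bf f₁ f₂ p) := by
    apply setIntegral_congr_fun hmeasS
    intro p hp
    obtain ⟨hp1, hp2⟩ := hp
    have hmem : pc p ∈ Dd := by
      simp only [Dd, pc, Set.mem_setOf_eq]
      have key : (p.1 * Real.cos p.2) ^ 2 + (p.1 * Real.sin p.2) ^ 2 = p.1 ^ 2 := by
        linear_combination p.1 ^ 2 * Real.sin_sq_add_cos_sq p.2
      rw [key]
      nlinarith [hp1.1, hp1.2]
    show p.1 • Dd.indicator div (polarCoord.symm p) = Af f₁ f₂ p + Bf f₁ f₂ p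
    rw [pc_eq_polar, Set.indicator_of_mem hmem, Af_add_Bf, smul_eq_mul]
  have stepB : ∫ p in S, Bf f₁ f₂ p = 0 := by
    rw [hSdef, Measure.volume_eq_prod, setIntegral_prod]
    · have inner : ∀ r ∈ Set.Ioo (0:ℝ) 1, (∫ θ in Set.Ioo (-π) π, Bf f₁ f₂ (r, θ)) = 0 := by
        intro r hr
        have hpcU : ∀ θ : ℝ, pc (r, θ) ∈ U := fun θ =>
          hKU (pc_mem_Kd ⟨⟨hr.1.le, hr.2.le⟩, Set.mem_univ _⟩)
        have hderiv : ∀ θ ∈ Set.uIcc (-π) π,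
            HasDerivAt (fun t => Hf f₁ f₂ (r, t)) (Bf f₁ f₂ (r, θ)) θ := fun θ _ =>
          hasDerivAt_Hf f₁ f₂ (hdiff₁ _ (hpcU θ)) (hdiff₂ _ (hpcU θ))
        have hcont : ContinuousOn (fun θ => Bf f₁ f₂ (r, θ)) (Set.uIcc (-π) π) :=
          (contOn_Bf hU hf₁ hf₂ hKU).comp (Continuous.continuousOn (by fun_prop))
            (fun θ _ => ⟨⟨hr.1.le, hr.2.le⟩, Set.mem_univ _⟩)
        have hftc := intervalIntegral.integral_eq_sub_of_hasDerivAt hderiv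
          hcont.intervalIntegrable
        rw [← integral_Ioc_eq_integral_Ioo,
          ← intervalIntegral.integral_of_le (by linarith [Real.pi_pos] : -π ≤ π), hftc]
        simp [Hf, pc]
      rw [setIntegral_congr_fun measurableSet_Ioo inner]
      simp
    · rw [← Measure.volume_eq_prod]
      exact hBint
  have stepA : ∫ p in S, Af f₁ f₂ p = 0 := by
    have hswap : ∫ p in S, Af f₁ f₂ p
        = ∫ q in (Set.Ioo (-π) π ×ˢ Set.Ioo (0:ℝ) 1), Af f₁ f₂ (q.2, q.1) := by
      rw [Measure.volume_eq_prod]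
      have hMP := (Measure.measurePreserving_swap (μ := (volume : Measure ℝ))
        (ν := (volume : Measure ℝ))).setIntegral_preimage_emb
        MeasurableEquiv.prodComm.measurableEmbedding (Af f₁ f₂) S
      rw [← hMP, hSdef, Set.preimage_swap_prod]
      rfl
    rw [hswap, Measure.volume_eq_prod, setIntegral_prod]
    · have inner : ∀ θ ∈ Set.Ioo (-π) π, (∫ r in Set.Ioo (0:ℝ) 1, Af f₁ f₂ (r, θ)) = 0 := by
        intro θ hθ
        have hpcU : ∀ r ∈ Set.Icc (0:ℝ) 1, pc (r, θ) ∈ U := fun r hr =>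
          hKU (pc_mem_Kd ⟨hr, Set.mem_univ _⟩)
        have hderiv : ∀ r ∈ Set.uIcc (0:ℝ) 1,
            HasDerivAt (fun s => Gf f₁ f₂ (s, θ)) (Af f₁ f₂ (r, θ)) r := by
          intro r hr
          rw [Set.uIcc_of_le zero_le_one] at hr
          exact hasDerivAt_Gf f₁ f₂ (hdiff₁ _ (hpcU r hr)) (hdiff₂ _ (hpcU r hr))
        have hcont : ContinuousOn (fun r => Af f₁ f₂ (r, θ)) (Set.uIcc (0:ℝ) 1) := by
          rw [Set.uIcc_of_le zero_le_one]
          exact (contOn_Af hU hf₁ hf₂ hKU).comp (Continuous.continuousOn (by fun_prop))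
            (fun r hr => ⟨hr, Set.mem_univ _⟩)
        have hftc := intervalIntegral.integral_eq_sub_of_hasDerivAt hderiv
          hcont.intervalIntegrable
        rw [← integral_Ioc_eq_integral_Ioo,
          ← intervalIntegral.integral_of_le (zero_le_one' ℝ), hftc]
        have hc1 : f₁ (pc (1, θ)) = 0 := by
          apply hb₁
          simp only [pc]
          linear_combination Real.sin_sq_add_cos_sq θ
        have hc2 : f₂ (pc (1, θ)) = 0 := by
          apply hb₂
          simp only [pc]
          linear_combination Real.sin_sq_add_cos_sq θ
        simp [Gf, hc1, hc2]
      rw [setIntegral_congr_fun measurableSet_Ioo inner]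
      simp
    · have h1 : Integrable (Af f₁ f₂)
          ((volume.restrict (Set.Ioo (0:ℝ) 1)).prod (volume.restrict (Set.Ioo (-π) π))) := by
        rw [Measure.prod_restrict, ← Measure.volume_eq_prod]
        exact hAint
      have h2 := h1.swap
      rwa [Measure.prod_restrict] at h2
  calc ∫ p in Dd, div p = ∫ p in S, (Af f₁ f₂ p + Bf f₁ f₂ p) := by
        rw [step1, step2, step3, step4]
    _ = (∫ p in S, Af f₁ f₂ p) + ∫ p in S, Bf f₁ f₂ p := integral_add hAint hBint
    _ = 0 := by rw [stepA, stepB, add_zero]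


/-! ### Transfer to the Euclidean plane -/

/-- The standard linear identification of `ℝ × ℝ` with the Euclidean plane. -/
def Lmap : (ℝ × ℝ) ≃L[ℝ] Plane :=
  ((EuclideanSpace.equiv (Fin 2) ℝ).trans (ContinuousLinearEquiv.finTwoArrow ℝ ℝ)).symm

lemma Lmap_e1 : Lmap ((1:ℝ), (0:ℝ)) = EuclideanSpace.single (0 : Fin 2) (1:ℝ) := by
  ext i; fin_cases i <;> simp [Lmap, EuclideanSpace.single_apply]

lemma Lmap_e2 : Lmap ((0:ℝ), (1:ℝ)) = EuclideanSpace.single (1 : Fin 2) (1:ℝ) := by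
  ext i; fin_cases i <;> simp [Lmap, EuclideanSpace.single_apply]

lemma norm_Lmap_sq (p : ℝ × ℝ) : ‖Lmap p‖ ^ 2 = p.1 ^ 2 + p.2 ^ 2 := by
  rw [EuclideanSpace.norm_eq, Real.sq_sqrt (by positivity)]
  simp [Fin.sum_univ_two]
  norm_num [show (Lmap p) 0 = p.1 from rfl, show (Lmap p) 1 = p.2 from rfl, sq_abs]

lemma Lmap_mem_ball {p : ℝ × ℝ} : Lmap p ∈ ball (0 : Plane) 1 ↔ p ∈ Dd := by
  rw [mem_ball_zero_iff]
  have h := norm_Lmap_sq p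
  have h0 : (0:ℝ) ≤ ‖Lmap p‖ := norm_nonneg _
  constructor
  · intro hlt
    simp only [Dd, Set.mem_setOf_eq]
    nlinarith
  · intro hlt
    simp only [Dd, Set.mem_setOf_eq] at hlt
    nlinarith

lemma Lmap_mem_closedBall {p : ℝ × ℝ} (hp : p ∈ Kd) : Lmap p ∈ closedBall (0 : Plane) 1 := by
  rw [mem_closedBall_zero_iff]
  have h := norm_Lmap_sq p
  have h0 : (0:ℝ) ≤ ‖Lmap p‖ := norm_nonneg _
  simp only [Kd, Set.mem_setOf_eq] at hp
  nlinarith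

lemma Lmap_mem_sphere {p : ℝ × ℝ} (hp : p.1 ^ 2 + p.2 ^ 2 = 1) :
    Lmap p ∈ sphere (0 : Plane) 1 := by
  rw [mem_sphere_zero_iff_norm]
  have h := norm_Lmap_sq p
  have h0 : (0:ℝ) ≤ ‖Lmap p‖ := norm_nonneg _
  have hfac : (‖Lmap p‖ - 1) * (‖Lmap p‖ + 1) = 0 := by nlinarith
  rcases mul_eq_zero.1 hfac with h1 | h1
  · linarith
  · linarith

/-- The measurable identification of the plane with `ℝ × ℝ`. -/
def Emeas : Plane ≃ᵐ ℝ × ℝ :=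
  (MeasurableEquiv.toLp 2 (Fin 2 → ℝ)).symm.trans MeasurableEquiv.finTwoArrow

lemma Emeas_symm_eq : ⇑Emeas.symm = ⇑Lmap := rfl

lemma measurePreserving_Emeas_symm : MeasurePreserving (⇑Emeas.symm) volume volume :=
  MeasurePreserving.symm Emeas <|
    (volume_preserving_finTwoArrow ℝ).comp (EuclideanSpace.volume_preserving_symm_measurableEquiv_toLp (Fin 2))

/-- Transfer of iterated directional derivatives through `Lmap`. -/
lemma second_deriv_transfer {U : Set Plane} (hU : IsOpen U) {w : Plane → ℝ}
    (hw : ContDiffOn ℝ 2 w U) {p : ℝ × ℝ} (hp : Lmap p ∈ U) (e e' : ℝ × ℝ) :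
    fderiv ℝ (fun q => fderiv ℝ (fun q' => w (Lmap q')) q e) p e'
      = fderiv ℝ (fun x => fderiv ℝ w x (Lmap e)) (Lmap p) (Lmap e') := by
  have hVopen : IsOpen (⇑Lmap ⁻¹' U) := hU.preimage Lmap.continuous
  have hdiffW : ∀ x ∈ U, DifferentiableAt ℝ w x := fun x hx =>
    ((hw.of_le one_le_two).differentiableOn one_ne_zero).differentiableAt (hU.mem_nhds hx)
  -- the inner functions agree on a neighborhood of p
  have hEq : (fun q => fderiv ℝ (fun q' => w (Lmap q')) q e)
      =ᶠ[nhds p] (fun q => fderiv ℝ w (Lmap q) (Lmap e)) := by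
    filter_upwards [hVopen.mem_nhds hp] with q hq
    have hcomp : fderiv ℝ (w ∘ ⇑Lmap) q = (fderiv ℝ w (Lmap q)).comp
        (Lmap : (ℝ × ℝ) →L[ℝ] Plane) := by
      rw [fderiv_comp q (hdiffW _ hq) Lmap.differentiableAt, Lmap.fderiv]
    show fderiv ℝ (w ∘ ⇑Lmap) q e = fderiv ℝ w (Lmap q) (Lmap e)
    rw [hcomp]; rfl
  rw [hEq.fderiv_eq]
  -- now apply chain rule to `(fun x => fderiv ℝ w x (Lmap e)) ∘ Lmap`
  have hW : DifferentiableAt ℝ (fun x => fderiv ℝ w x (Lmap e)) (Lmap p) := by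
    have hC : ContDiffOn ℝ 1 (fun x => fderiv ℝ w x (Lmap e)) U :=
      (hw.fderiv_of_isOpen hU le_rfl).clm_apply contDiffOn_const
    exact (hC.differentiableOn one_ne_zero).differentiableAt (hU.mem_nhds hp)
  have : fderiv ℝ ((fun x => fderiv ℝ w x (Lmap e)) ∘ ⇑Lmap) p
      = (fderiv ℝ (fun x => fderiv ℝ w x (Lmap e)) (Lmap p)).comp
        (Lmap : (ℝ × ℝ) →L[ℝ] Plane) := by
    rw [fderiv_comp p hW Lmap.differentiableAt, Lmap.fderiv]
  show fderiv ℝ ((fun x => fderiv ℝ w x (Lmap e)) ∘ ⇑Lmap) p e' = _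
  rw [this]; rfl

/-- Green's identity for two `C²` functions vanishing on the unit circle. -/
theorem green {U : Set Plane} (hU : IsOpen U) (hBU : closedBall (0 : Plane) 1 ⊆ U)
    {v w : Plane → ℝ} (hv : ContDiffOn ℝ 2 v U) (hw : ContDiffOn ℝ 2 w U)
    (hv0 : ∀ x ∈ sphere (0 : Plane) 1, v x = 0)
    (hw0 : ∀ x ∈ sphere (0 : Plane) 1, w x = 0) :
    ∫ x in ball (0 : Plane) 1, (v x * lap w x - w x * lap v x) = 0 := by
  set V : Set (ℝ × ℝ) := ⇑Lmap ⁻¹' U with hVdef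
  have hVopen : IsOpen V := hU.preimage Lmap.continuous
  have hKdV : Kd ⊆ V := fun p hp => hBU (Lmap_mem_closedBall hp)
  set vt : ℝ × ℝ → ℝ := fun q => v (Lmap q) with hvt
  set wt : ℝ × ℝ → ℝ := fun q => w (Lmap q) with hwt
  have hvtC : ContDiffOn ℝ 2 vt V :=
    hv.comp Lmap.contDiff.contDiffOn (Set.mapsTo_preimage _ _)
  have hwtC : ContDiffOn ℝ 2 wt V :=
    hw.comp Lmap.contDiff.contDiffOn (Set.mapsTo_preimage _ _)
  set f₁ : ℝ × ℝ → ℝ := fun q =>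
    vt q * fderiv ℝ wt q ((1:ℝ), (0:ℝ)) - wt q * fderiv ℝ vt q ((1:ℝ), (0:ℝ)) with hf₁def
  set f₂ : ℝ × ℝ → ℝ := fun q =>
    vt q * fderiv ℝ wt q ((0:ℝ), (1:ℝ)) - wt q * fderiv ℝ vt q ((0:ℝ), (1:ℝ)) with hf₂def
  have hcd : ∀ e : ℝ × ℝ, ContDiffOn ℝ 1 (fun q =>
      vt q * fderiv ℝ wt q e - wt q * fderiv ℝ vt q e) V := by
    intro e
    exact ((hvtC.of_le one_le_two).mul
        ((hwtC.fderiv_of_isOpen hVopen le_rfl).clm_apply contDiffOn_const)).sub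
      ((hwtC.of_le one_le_two).mul
        ((hvtC.fderiv_of_isOpen hVopen le_rfl).clm_apply contDiffOn_const))
  have hb : ∀ p : ℝ × ℝ, p.1 ^ 2 + p.2 ^ 2 = 1 → vt p = 0 ∧ wt p = 0 := fun p hp =>
    ⟨hv0 _ (Lmap_mem_sphere hp), hw0 _ (Lmap_mem_sphere hp)⟩
  have hdivthm := divergence_ball (f₁ := f₁) (f₂ := f₂) hVopen hKdV (hcd _) (hcd _)
    (fun p hp => by simp only [hf₁def]; simp [(hb p hp).1, (hb p hp).2])
    (fun p hp => by simp only [hf₂def]; simp [(hb p hp).1, (hb p hp).2])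
  -- identify the integrand pointwise on Dd
  have hpoint : ∀ p ∈ Dd,
      fderiv ℝ f₁ p ((1:ℝ), (0:ℝ)) + fderiv ℝ f₂ p ((0:ℝ), (1:ℝ))
        = v (Lmap p) * lap w (Lmap p) - w (Lmap p) * lap v (Lmap p) := by
    intro p hp
    have hpK : p ∈ Kd := by
      have hp' : p.1 ^ 2 + p.2 ^ 2 < 1 := hp
      exact le_of_lt hp'
    have hpV : p ∈ V := hKdV hpK
    have hpU : Lmap p ∈ U := hpV
    have hdAt : ∀ {g : Plane → ℝ}, ContDiffOn ℝ 2 g U → DifferentiableAt ℝ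
        (fun q => g (Lmap q)) p := fun {g} hg =>
      ((((hg.comp Lmap.contDiff.contDiffOn (Set.mapsTo_preimage _ _)).of_le
        one_le_two).differentiableOn one_ne_zero).differentiableAt (hVopen.mem_nhds hpV))
    have hgAt : ∀ (e : ℝ × ℝ) {g : Plane → ℝ}, ContDiffOn ℝ 2 g U → DifferentiableAt ℝ
        (fun q => fderiv ℝ (fun q' => g (Lmap q')) q e) p := by
      intro e g hg
      have hC : ContDiffOn ℝ 1 (fun q => fderiv ℝ (fun q' => g (Lmap q')) q e) V :=
        ((hg.comp Lmap.contDiff.contDiffOn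
          (Set.mapsTo_preimage _ _)).fderiv_of_isOpen hVopen le_rfl).clm_apply contDiffOn_const
      exact (hC.differentiableOn one_ne_zero).differentiableAt (hVopen.mem_nhds hpV)
    -- product rule
    have hprod : ∀ e : ℝ × ℝ,
        fderiv ℝ (fun q => vt q * fderiv ℝ wt q e - wt q * fderiv ℝ vt q e) p e
          = vt p * fderiv ℝ (fun q => fderiv ℝ wt q e) p e
            - wt p * fderiv ℝ (fun q => fderiv ℝ vt q e) p e := by
      intro e
      have h1 := ((hdAt hv).hasFDerivAt.mul' ((hgAt e hw).hasFDerivAt)).sub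
        ((hdAt hw).hasFDerivAt.mul' ((hgAt e hv).hasFDerivAt))
      rw [HasFDerivAt.fderiv (f := fun q => vt q * fderiv ℝ wt q e - wt q * fderiv ℝ vt q e) h1]
      simp only [ContinuousLinearMap.sub_apply, ContinuousLinearMap.add_apply,
        ContinuousLinearMap.coe_smul', Pi.smul_apply, ContinuousLinearMap.smulRight_apply,
        smul_eq_mul, op_smul_eq_mul]
      ring
    have hkey₁ := hprod ((1:ℝ), (0:ℝ))
    have hkey₂ := hprod ((0:ℝ), (1:ℝ))
    rw [hf₁def, hf₂def]
    rw [show (fun q => vt q * fderiv ℝ wt q ((1:ℝ), (0:ℝ)) -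
        wt q * fderiv ℝ vt q ((1:ℝ), (0:ℝ))) = f₁ from rfl] at hkey₁
    rw [show (fun q => vt q * fderiv ℝ wt q ((0:ℝ), (1:ℝ)) -
        wt q * fderiv ℝ vt q ((0:ℝ), (1:ℝ))) = f₂ from rfl] at hkey₂
    rw [hkey₁, hkey₂]
    have t1 := second_deriv_transfer hU hw hpU ((1:ℝ), (0:ℝ)) ((1:ℝ), (0:ℝ))
    have t2 := second_deriv_transfer hU hw hpU ((0:ℝ), (1:ℝ)) ((0:ℝ), (1:ℝ))
    have t3 := second_deriv_transfer hU hv hpU ((1:ℝ), (0:ℝ)) ((1:ℝ), (0:ℝ))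
    have t4 := second_deriv_transfer hU hv hpU ((0:ℝ), (1:ℝ)) ((0:ℝ), (1:ℝ))
    rw [← hwt] at t1 t2; rw [← hvt] at t3 t4
    rw [t1, t2, t3, t4, Lmap_e1, Lmap_e2]
    simp only [lap, Fin.sum_univ_two]
    ring
  -- transfer the integral
  have htrans : ∫ x in ball (0 : Plane) 1, (v x * lap w x - w x * lap v x)
      = ∫ p in Dd, (v (Lmap p) * lap w (Lmap p) - w (Lmap p) * lap v (Lmap p)) := by
    have := measurePreserving_Emeas_symm.setIntegral_preimage_emb
      Emeas.symm.measurableEmbedding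
      (fun x => v x * lap w x - w x * lap v x) (ball (0 : Plane) 1)
    rw [← this]
    have hpre : ⇑Emeas.symm ⁻¹' ball (0 : Plane) 1 = Dd := by
      ext p
      rw [Set.mem_preimage, Emeas_symm_eq]
      exact Lmap_mem_ball
    rw [hpre, Emeas_symm_eq]
  rw [htrans, ← hdivthm]
  apply setIntegral_congr_fun isOpen_Dd.measurableSet
  intro p hp
  exact (hpoint p hp).symm

/-! ### Properties of the nonlinearity -/

lemma gfun_eq : gfun = fun t => Real.sin (min π (max (-π) t)) := by
  funext t
  unfold gfun
  split_ifs with h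
  · rw [abs_le] at h
    rw [max_eq_right h.1, min_eq_right h.2]
  · have h' : π < |t| := not_le.mp h
    rcases abs_cases t with ⟨heq, _⟩ | ⟨heq, _⟩
    · rw [heq] at h'
      rw [max_eq_right (by linarith [Real.pi_pos]), min_eq_left h'.le]
      exact Real.sin_pi.symm
    · rw [heq] at h'
      rw [max_eq_left (by linarith), min_eq_right (by linarith [Real.pi_pos]),
        Real.sin_neg, Real.sin_pi, neg_zero]

lemma gfun_continuous : Continuous gfun := by
  rw [gfun_eq]
  fun_prop

lemma gfun_nonneg {t : ℝ} (ht : 0 ≤ t) : 0 ≤ gfun t := by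
  unfold gfun
  split_ifs with h
  · exact Real.sin_nonneg_of_nonneg_of_le_pi ht (by rw [abs_le] at h; exact h.2)
  · exact le_rfl

lemma gfun_neg (t : ℝ) : gfun (-t) = -gfun t := by
  unfold gfun
  rw [abs_neg]
  split_ifs with h
  · exact Real.sin_neg t
  · exact neg_zero.symm

lemma gfun_zero_imp {t : ℝ} (ht : 0 ≤ t) (hz : gfun t = 0) : t = 0 ∨ π ≤ t := by
  unfold gfun at hz
  split_ifs at hz with h
  · rw [abs_le] at h
    obtain ⟨n, hn⟩ := Real.sin_eq_zero_iff.mp hz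
    have hpi := Real.pi_pos
    have hn0 : 0 ≤ n := by
      by_contra hc
      push_neg at hc
      have hn' : n ≤ -1 := by omega
      have : (n : ℝ) ≤ -1 := by exact_mod_cast hn'
      nlinarith
    have hn1 : n ≤ 1 := by
      by_contra hc
      push_neg at hc
      have : (2 : ℝ) ≤ (n : ℝ) := by exact_mod_cast hc
      nlinarith
    interval_cases n
    · left; simpa using hn.symm
    · right; simp at hn; linarith [hn]
  · right
    rw [not_le, abs_of_nonneg ht] at h
    exact h.le

/-! ### The Laplacian of a negated function -/

lemma lap_neg (u : Plane → ℝ) (x : Plane) : lap (fun y => -u y) x = -(lap u x) := by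
  unfold lap
  rw [← Finset.sum_neg_distrib]
  apply Finset.sum_congr rfl
  intro i _
  have h : (fun y => fderiv ℝ (fun z => -u z) y (EuclideanSpace.single i 1))
      = fun y => -((fun z => fderiv ℝ u z (EuclideanSpace.single i 1)) y) := by
    funext y
    rw [fderiv_fun_neg]
    simp
  rw [h, fderiv_fun_neg]
  simp

/-! ### Vanishing of nonnegative functions with zero integral -/

lemma vanish_of_integral_zero (F : Plane → ℝ) (hcont : ContinuousOn F (ball (0:Plane) 1))
    (hnn : ∀ x ∈ ball (0:Plane) 1, 0 ≤ F x) (hint : IntegrableOn F (ball (0:Plane) 1))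
    (hzero : ∫ x in ball (0:Plane) 1, F x = 0) : ∀ x ∈ ball (0:Plane) 1, F x = 0 := by
  by_contra hc
  push_neg at hc
  obtain ⟨x₀, hx₀, hFx₀⟩ := hc
  have hV : IsOpen (ball (0:Plane) 1 ∩ F ⁻¹' ({0}ᶜ)) :=
    hcont.isOpen_inter_preimage isOpen_ball isOpen_compl_singleton
  have hVne : (ball (0:Plane) 1 ∩ F ⁻¹' ({0}ᶜ)).Nonempty := ⟨x₀, hx₀, hFx₀⟩
  have hVsub : (ball (0:Plane) 1 ∩ F ⁻¹' ({0}ᶜ)) ⊆ Function.support F ∩ ball (0:Plane) 1 := by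
    intro x ⟨h1, h2⟩
    exact ⟨h2, h1⟩
  have hmeaspos : 0 < volume (Function.support F ∩ ball (0:Plane) 1) :=
    lt_of_lt_of_le (hV.measure_pos volume hVne) (measure_mono hVsub)
  have hae : 0 ≤ᵐ[volume.restrict (ball (0:Plane) 1)] F :=
    (ae_restrict_iff' measurableSet_ball).2 (Filter.Eventually.of_forall hnn)
  have := (setIntegral_pos_iff_support_of_nonneg_ae hae hint).2 hmeaspos
  rw [hzero] at this
  exact lt_irrefl 0 this

/-! ### The main argument in the nonnegative case -/

theorem nonneg_case (lam1 : ℝ) (φ₁ : Plane → ℝ)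
    (hφC2 : ∃ U : Set Plane, IsOpen U ∧ closedBall 0 1 ⊆ U ∧ ContDiffOn ℝ 2 φ₁ U)
    (hφpos : ∀ x ∈ ball (0 : Plane) 1, 0 < φ₁ x)
    (hφbd : ∀ x ∈ sphere (0 : Plane) 1, φ₁ x = 0)
    (hφeq : ∀ x ∈ ball (0 : Plane) 1, -lap φ₁ x = lam1 * φ₁ x)
    (u : Plane → ℝ)
    (huC2 : ∃ U : Set Plane, IsOpen U ∧ closedBall 0 1 ⊆ U ∧ ContDiffOn ℝ 2 u U)
    (hubd : ∀ x ∈ sphere (0 : Plane) 1, u x = 0)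
    (hueq : ∀ x ∈ ball (0 : Plane) 1, -lap u x = lam1 * u x + gfun (u x))
    (hpos : ∀ x ∈ ball (0 : Plane) 1, 0 ≤ u x) :
    ∀ x ∈ ball (0 : Plane) 1, u x = 0 := by
  have hpi := Real.pi_pos
  obtain ⟨U₁, hU₁o, hBU₁, hφC⟩ := hφC2
  obtain ⟨U₂, hU₂o, hBU₂, huC⟩ := huC2
  set U : Set Plane := U₁ ∩ U₂ with hUdef
  have hUo : IsOpen U := hU₁o.inter hU₂o
  have hBU : closedBall (0:Plane) 1 ⊆ U := Set.subset_inter hBU₁ hBU₂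
  have hφ : ContDiffOn ℝ 2 φ₁ U := hφC.mono Set.inter_subset_left
  have hu : ContDiffOn ℝ 2 u U := huC.mono Set.inter_subset_right
  have hgreen := green hUo hBU hφ hu hφbd hubd
  have hballU : ball (0:Plane) 1 ⊆ U := ball_subset_closedBall.trans hBU
  -- rewrite the integrand
  have h1 : ∀ x ∈ ball (0:Plane) 1,
      φ₁ x * lap u x - u x * lap φ₁ x = -(φ₁ x * gfun (u x)) := by
    intro x hx
    have e1 : lap u x = -(lam1 * u x) - gfun (u x) := by linarith [hueq x hx]
    have e2 : lap φ₁ x = -(lam1 * φ₁ x) := by linarith [hφeq x hx]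
    rw [e1, e2]
    ring
  have h2 : ∫ x in ball (0:Plane) 1, (φ₁ x * gfun (u x)) = 0 := by
    have h3 : ∫ x in ball (0:Plane) 1, -(φ₁ x * gfun (u x)) = 0 := by
      rw [← setIntegral_congr_fun measurableSet_ball h1]
      exact hgreen
    rw [integral_neg] at h3
    linarith
  -- continuity and integrability on the ball
  have hcontF : ContinuousOn (fun x => φ₁ x * gfun (u x)) (closedBall (0:Plane) 1) :=
    ((hφ.continuousOn.mono hBU).mul
      ((gfun_continuous.comp_continuousOn (hu.continuousOn.mono hBU))))
  have hintF : IntegrableOn (fun x => φ₁ x * gfun (u x)) (ball (0:Plane) 1) :=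
    (hcontF.integrableOn_compact (isCompact_closedBall _ _)).mono_set ball_subset_closedBall
  have hvanish := vanish_of_integral_zero (fun x => φ₁ x * gfun (u x))
    (hcontF.mono ball_subset_closedBall)
    (fun x hx => mul_nonneg (hφpos x hx).le (gfun_nonneg (hpos x hx))) hintF h2
  have hgu : ∀ x ∈ ball (0:Plane) 1, gfun (u x) = 0 := by
    intro x hx
    have hv := hvanish x hx
    have hφx := hφpos x hx
    rcases mul_eq_zero.mp hv with h | h
    · exact absurd h (ne_of_gt hφx)
    · exact h
  -- now the connectedness argument
  by_contra hcon
  push_neg at hcon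
  obtain ⟨x₀, hx₀, hux₀⟩ := hcon
  have hx₀pi : π ≤ u x₀ := by
    rcases gfun_zero_imp (hpos x₀ hx₀) (hgu x₀ hx₀) with h | h
    · exact absurd h hux₀
    · exact h
  have hcontu : ContinuousOn u (ball (0:Plane) 1) :=
    hu.continuousOn.mono hballU
  -- every value of u on the ball is ≥ π
  have hall : ∀ x ∈ ball (0:Plane) 1, π ≤ u x := by
    intro x hx
    rcases gfun_zero_imp (hpos x hx) (hgu x hx) with h | h
    · exfalso
      -- u takes the value 0 at x and ≥ π at x₀; by connectedness it takes value π/2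
      have hpre : IsPreconnected (u '' ball (0:Plane) 1) :=
        ((convex_ball (0:Plane) 1).isPreconnected).image u hcontu
      have h0mem : (0:ℝ) ∈ u '' ball (0:Plane) 1 := ⟨x, hx, h⟩
      have hx₀mem : u x₀ ∈ u '' ball (0:Plane) 1 := ⟨x₀, hx₀, rfl⟩
      have hmem : π/2 ∈ u '' ball (0:Plane) 1 :=
        hpre.Icc_subset h0mem hx₀mem ⟨by linarith, by linarith⟩
      obtain ⟨x₂, hx₂, hux₂⟩ := hmem
      have := hgu x₂ hx₂
      rw [hux₂] at this
      unfold gfun at this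
      rw [if_pos (by rw [abs_of_nonneg (by linarith)]; linarith)] at this
      rw [Real.sin_pi_div_two] at this
      exact one_ne_zero this
    · exact h
  -- contradiction at the boundary
  set b : Plane := EuclideanSpace.single (0 : Fin 2) (1:ℝ) with hbdef
  have hbnorm : ‖b‖ = 1 := by
    rw [hbdef, EuclideanSpace.norm_single]
    norm_num
  have hbsphere : b ∈ sphere (0:Plane) 1 := by
    rwa [mem_sphere_zero_iff_norm]
  have hub : u b = 0 := hubd b hbsphere
  have hbU : b ∈ U := hBU (sphere_subset_closedBall hbsphere)
  have hcb : ContinuousAt u b := (hu.continuousOn.continuousAt (hUo.mem_nhds hbU))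
  rw [Metric.continuousAt_iff] at hcb
  obtain ⟨δ, hδ, hball⟩ := hcb π hpi
  set t : ℝ := max (1/2) (1 - δ/2) with htdef
  have ht1 : t < 1 := by
    rw [htdef]
    apply max_lt <;> linarith
  have ht0 : 0 < t := lt_of_lt_of_le (by norm_num) (le_max_left _ _)
  have hdist : dist (t • b) b < δ := by
    rw [dist_eq_norm]
    have : t • b - b = (t - 1) • b := by
      rw [sub_smul, one_smul]
    rw [this, norm_smul, hbnorm, mul_one, Real.norm_eq_abs, abs_of_nonpos (by linarith)]
    have : 1 - δ/2 ≤ t := le_max_right _ _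
    linarith
  have hmem : t • b ∈ ball (0:Plane) 1 := by
    rw [mem_ball_zero_iff, norm_smul, hbnorm, mul_one, Real.norm_eq_abs,
      abs_of_pos ht0]
    exact ht1
  have := hball hdist
  rw [hub, dist_zero_right, Real.norm_eq_abs] at this
  have hge := hall _ hmem
  rw [abs_of_nonneg (by linarith)] at this
  linarith

end CompSign

theorem comparison_solution_changes_sign
    (lam1 : ℝ) (φ₁ : Plane → ℝ)
    (hlam1 : 0 < lam1)
    (hφC2 : ∃ U : Set Plane, IsOpen U ∧ closedBall 0 1 ⊆ U ∧ ContDiffOn ℝ 2 φ₁ U)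
    (hφpos : ∀ x ∈ ball (0 : Plane) 1, 0 < φ₁ x)
    (hφbd : ∀ x ∈ sphere (0 : Plane) 1, φ₁ x = 0)
    (hφeq : ∀ x ∈ ball (0 : Plane) 1, -lap φ₁ x = lam1 * φ₁ x)
    (hφrad : ∀ x y : Plane, ‖x‖ = ‖y‖ → φ₁ x = φ₁ y)
    (hφnorm : (∫ x in ball (0 : Plane) 1, (φ₁ x) ^ 2) = 1)
    (hφfirst : ∀ v : Plane → ℝ, ContDiff ℝ 1 v →
      (∀ x ∈ sphere (0 : Plane) 1, v x = 0) →
      lam1 * ∫ x in ball (0 : Plane) 1, (v x) ^ 2 ≤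
        ∫ x in ball (0 : Plane) 1, ‖gradient v x‖ ^ 2)
    (u : Plane → ℝ)
    (huC2 : ∃ U : Set Plane, IsOpen U ∧ closedBall 0 1 ⊆ U ∧ ContDiffOn ℝ 2 u U)
    (hubd : ∀ x ∈ sphere (0 : Plane) 1, u x = 0)
    (hueq : ∀ x ∈ ball (0 : Plane) 1, -lap u x = lam1 * u x + gfun (u x))
    (hsign : (∀ x ∈ ball (0 : Plane) 1, 0 ≤ u x) ∨ (∀ x ∈ ball (0 : Plane) 1, u x ≤ 0)) :
    ∀ x ∈ ball (0 : Plane) 1, u x = 0 := by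
  rcases hsign with hpos | hneg
  · exact CompSign.nonneg_case lam1 φ₁ hφC2 hφpos hφbd hφeq u huC2 hubd hueq hpos
  · intro x hx
    have h := CompSign.nonneg_case lam1 φ₁ hφC2 hφpos hφbd hφeq (fun y => -u y)
      (by obtain ⟨U, h1, h2, h3⟩ := huC2; exact ⟨U, h1, h2, h3.neg⟩)
      (fun y hy => by show -u y = 0; rw [hubd y hy, neg_zero])
      (fun y hy => by
        show -lap (fun z => -u z) y = lam1 * (-u y) + gfun (-u y)
        rw [CompSign.lap_neg, CompSign.gfun_neg]
        linarith [hueq y hy])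
      (fun y hy => neg_nonneg.mpr (hneg y hy))
      x hx
    simpa using h
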